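/- Let V_1 and V_2 be disjoint sets of qubit indices with V = V_1 ∪ V_2 ⊆ {0, …, n−1}, let E ⊆ V_1 × V_2 be a set of edges between V_1 and V_2, and let J^y_{jk}, J^z_{jk} (for (j,k) ∈ E) and h_l (for l ∈ V) be real coefficients. Define the 2^n × 2^n bipartite Hamiltonian H_2 = Σ_{(j,k) ∈ E} ( J^y_{jk} Y_j Y_k + J^z_{jk} Z_j Z_k ) + Σ_{l ∈ V} h_l X_l, and the operator W = Π_{j ∈ V_1} Y_j · Π_{k ∈ V_2} Z_k. Then W is unitary and W H_2 W† = −H_2; consequently the spectra of H_2 and −H_2 coincide, so the smallest eigenvalue of H_2 is the negative of its largest eigenvalue. -/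
import Mathlib


open Matrix

/-- The single-qubit Pauli matrices. -/
noncomputable def pauliX : Matrix (Fin 2) (Fin 2) ℂ := !![0, 1; 1, 0]
noncomputable def pauliY : Matrix (Fin 2) (Fin 2) ℂ := !![0, -Complex.I; Complex.I, 0]
noncomputable def pauliZ : Matrix (Fin 2) (Fin 2) ℂ := !![1, 0; 0, -1]

/-- The operator `I ⊗ ... ⊗ P ⊗ ... ⊗ I` acting as `P` on qubit `j` of an `n`-qubit
register, realized on the tensor-product index type `Fin n → Fin 2`. -/
noncomputable def onQubit {n : ℕ} (P : Matrix (Fin 2) (Fin 2) ℂ) (j : Fin n) :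
    Matrix (Fin n → Fin 2) (Fin n → Fin 2) ℂ :=
  fun x y => P (x j) (y j) * ∏ i ∈ Finset.univ.erase j, (if x i = y i then (1 : ℂ) else 0)

/-- Tensor product of one-qubit matrices over all qubits. -/
noncomputable def tp {n : ℕ} (A : Fin n → Matrix (Fin 2) (Fin 2) ℂ) :
    Matrix (Fin n → Fin 2) (Fin n → Fin 2) ℂ :=
  fun x y => ∏ i, A i (x i) (y i)

lemma tp_mul {n : ℕ} (A B : Fin n → Matrix (Fin 2) (Fin 2) ℂ) :
    tp A * tp B = tp (fun i => A i * B i) := by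
  funext x y
  simp only [tp, Matrix.mul_apply]
  rw [Fintype.prod_sum (κ := fun _ : Fin n => Fin 2) (fun i a => A i (x i) a * B i a (y i))]
  exact Finset.sum_congr rfl fun z _ => Finset.prod_mul_distrib.symm

lemma tp_one {n : ℕ} : tp (fun _ : Fin n => (1 : Matrix (Fin 2) (Fin 2) ℂ)) = 1 := by
  funext x y
  simp only [tp, Matrix.one_apply]
  by_cases h : x = y
  · simp [h]
  · obtain ⟨i, hi⟩ := Function.ne_iff.mp h
    rw [if_neg h]
    exact Finset.prod_eq_zero (Finset.mem_univ i) (by simp [hi])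

lemma tp_conjTranspose {n : ℕ} (A : Fin n → Matrix (Fin 2) (Fin 2) ℂ) :
    (tp A)ᴴ = tp (fun i => (A i)ᴴ) := by
  funext x y
  simp [tp, Matrix.conjTranspose_apply, map_prod]

lemma onQubit_eq_tp {n : ℕ} (P : Matrix (Fin 2) (Fin 2) ℂ) (j : Fin n) :
    onQubit P j = tp (fun i => if i = j then P else 1) := by
  funext x y
  simp only [onQubit, tp]
  rw [← Finset.mul_prod_erase Finset.univ _ (Finset.mem_univ j)]
  simp only [if_pos rfl]
  congr 1
  refine Finset.prod_congr rfl fun i hi => ?_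
  rw [if_neg (Finset.ne_of_mem_erase hi), Matrix.one_apply]

lemma onQubit_neg {n : ℕ} (P : Matrix (Fin 2) (Fin 2) ℂ) (j : Fin n) :
    onQubit (-P) j = -onQubit P j := by
  funext x y; simp [onQubit, neg_mul]

lemma YYH : pauliY * pauliYᴴ = 1 := by
  ext i j; fin_cases i <;> fin_cases j <;>
    simp [pauliY, Matrix.mul_apply, Fin.sum_univ_two, Matrix.conjTranspose_apply] <;>
    simp [Complex.ext_iff]

lemma ZZH : pauliZ * pauliZᴴ = 1 := by
  ext i j; fin_cases i <;> fin_cases j <;>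
    simp [pauliZ, Matrix.mul_apply, Fin.sum_univ_two, Matrix.conjTranspose_apply]

lemma YXY : pauliY * pauliX * pauliYᴴ = -pauliX := by
  ext i j; fin_cases i <;> fin_cases j <;>
    simp [pauliX, pauliY, Matrix.mul_apply, Fin.sum_univ_two, Matrix.conjTranspose_apply] <;>
    simp [Complex.ext_iff]

lemma ZXZ : pauliZ * pauliX * pauliZᴴ = -pauliX := by
  ext i j; fin_cases i <;> fin_cases j <;>
    simp [pauliX, pauliZ, Matrix.mul_apply, Fin.sum_univ_two, Matrix.conjTranspose_apply]

lemma YYY : pauliY * pauliY * pauliYᴴ = pauliY := by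
  ext i j; fin_cases i <;> fin_cases j <;>
    simp [pauliY, Matrix.mul_apply, Fin.sum_univ_two, Matrix.conjTranspose_apply] <;>
    simp [Complex.ext_iff]

lemma ZYZ : pauliZ * pauliY * pauliZᴴ = -pauliY := by
  ext i j; fin_cases i <;> fin_cases j <;>
    simp [pauliY, pauliZ, Matrix.mul_apply, Fin.sum_univ_two, Matrix.conjTranspose_apply]

lemma YZY : pauliY * pauliZ * pauliYᴴ = -pauliZ := by
  ext i j; fin_cases i <;> fin_cases j <;>
    simp [pauliY, pauliZ, Matrix.mul_apply, Fin.sum_univ_two, Matrix.conjTranspose_apply] <;>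
    simp [Complex.ext_iff]

lemma ZZZ : pauliZ * pauliZ * pauliZᴴ = pauliZ := by
  ext i j; fin_cases i <;> fin_cases j <;>
    simp [pauliZ, Matrix.mul_apply, Fin.sum_univ_two, Matrix.conjTranspose_apply]

/-- The local factor of the operator `W`. -/
noncomputable def wfun {n : ℕ} (V₁ V₂ : Finset (Fin n)) : Fin n → Matrix (Fin 2) (Fin 2) ℂ :=
  fun i => if i ∈ V₁ then pauliY else if i ∈ V₂ then pauliZ else 1

lemma wfun_mul_conj {n : ℕ} (V₁ V₂ : Finset (Fin n)) (i : Fin n) :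
    wfun V₁ V₂ i * (wfun V₁ V₂ i)ᴴ = 1 := by
  unfold wfun
  split_ifs with h1 h2
  · exact YYH
  · exact ZZH
  · simp

lemma tp_conj_onQubit {n : ℕ} (V₁ V₂ : Finset (Fin n)) (P : Matrix (Fin 2) (Fin 2) ℂ)
    (j : Fin n) :
    tp (wfun V₁ V₂) * onQubit P j * (tp (wfun V₁ V₂))ᴴ =
      onQubit (wfun V₁ V₂ j * P * (wfun V₁ V₂ j)ᴴ) j := by
  rw [onQubit_eq_tp, onQubit_eq_tp, tp_conjTranspose, tp_mul, tp_mul]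
  refine congrArg tp (funext fun i => ?_)
  by_cases h : i = j
  · subst h; simp
  · simp only [if_neg h, mul_one]
    exact wfun_mul_conj V₁ V₂ i

/-- For the bipartite Hamiltonian
`H₂ = Σ_{(j,k)∈E} (J^y_{jk} Y_j Y_k + J^z_{jk} Z_j Z_k) + Σ_{l∈V} h_l X_l` and
`W = Π_{j∈V₁} Y_j Π_{k∈V₂} Z_k` (realized as a tensor product over the qubits):
`W` is unitary, `W H₂ W† = -H₂`, hence `H₂` and `-H₂` have the same spectrum and the
smallest eigenvalue of `H₂` is the negative of its largest one. -/
theorem stmt_12 {n : ℕ} (V₁ V₂ : Finset (Fin n)) (hdisj : Disjoint V₁ V₂)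
    (E : Finset (Fin n × Fin n)) (hE : ∀ e ∈ E, e.1 ∈ V₁ ∧ e.2 ∈ V₂)
    (Jy Jz : Fin n → Fin n → ℝ) (hc : Fin n → ℝ) :
    let H₂ : Matrix (Fin n → Fin 2) (Fin n → Fin 2) ℂ :=
      (∑ e ∈ E, ((Jy e.1 e.2 : ℂ) • (onQubit pauliY e.1 * onQubit pauliY e.2) +
          (Jz e.1 e.2 : ℂ) • (onQubit pauliZ e.1 * onQubit pauliZ e.2))) +
        ∑ l ∈ V₁ ∪ V₂, (hc l : ℂ) • onQubit pauliX l
    let W : Matrix (Fin n → Fin 2) (Fin n → Fin 2) ℂ :=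
      fun x y => ∏ i : Fin n,
        (if i ∈ V₁ then pauliY (x i) (y i)
          else if i ∈ V₂ then pauliZ (x i) (y i)
          else if x i = y i then (1 : ℂ) else 0)
    (W * Wᴴ = 1 ∧ Wᴴ * W = 1) ∧
    W * H₂ * Wᴴ = -H₂ ∧
    spectrum ℂ H₂ = spectrum ℂ (-H₂) ∧
    (∀ a : ℝ, IsGreatest {x : ℝ | (x : ℂ) ∈ spectrum ℂ H₂} a →
      IsLeast {x : ℝ | (x : ℂ) ∈ spectrum ℂ H₂} (-a)) := by
  intro H₂ W
  have hW : W = tp (wfun V₁ V₂) := by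
    funext x y
    refine Finset.prod_congr rfl fun i _ => ?_
    simp only [wfun]
    split_ifs <;> simp [Matrix.one_apply, *]
  -- unitarity
  have hWU : W * Wᴴ = 1 := by
    rw [hW, tp_conjTranspose, tp_mul]
    rw [show (fun i => wfun V₁ V₂ i * (wfun V₁ V₂ i)ᴴ) =
        (fun _ : Fin n => (1 : Matrix (Fin 2) (Fin 2) ℂ)) from
      funext fun i => wfun_mul_conj V₁ V₂ i]
    exact tp_one
  have hWU' : Wᴴ * W = 1 := mul_eq_one_comm.mp hWU
  -- conjugation of a single on-qubit operator
  have conj1 : ∀ (P : Matrix (Fin 2) (Fin 2) ℂ) (j : Fin n),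
      W * onQubit P j * Wᴴ = onQubit (wfun V₁ V₂ j * P * (wfun V₁ V₂ j)ᴴ) j := by
    intro P j
    rw [hW]; exact tp_conj_onQubit V₁ V₂ P j
  have conjX : ∀ l ∈ V₁ ∪ V₂, W * onQubit pauliX l * Wᴴ = -onQubit pauliX l := by
    intro l hl
    rw [conj1]
    rcases Finset.mem_union.mp hl with h | h
    · rw [show wfun V₁ V₂ l = pauliY from if_pos h, YXY, onQubit_neg]
    · have h1 : l ∉ V₁ := Finset.disjoint_right.mp hdisj h
      rw [show wfun V₁ V₂ l = pauliZ by rw [wfun, if_neg h1, if_pos h], ZXZ, onQubit_neg]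
  have conjPair : ∀ (A B : Matrix (Fin 2) (Fin 2) ℂ) (j k : Fin n),
      W * (onQubit A j * onQubit B k) * Wᴴ =
        (W * onQubit A j * Wᴴ) * (W * onQubit B k * Wᴴ) := by
    intro A B j k
    have h : W * onQubit A j * Wᴴ * (W * onQubit B k * Wᴴ) =
        W * (onQubit A j * onQubit B k) * Wᴴ := by
      simp only [mul_assoc]
      rw [← mul_assoc Wᴴ W, hWU', one_mul]
    exact h.symm
  have conjYY : ∀ e ∈ E, W * (onQubit pauliY e.1 * onQubit pauliY e.2) * Wᴴ =
      -(onQubit pauliY e.1 * onQubit pauliY e.2) := by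
    intro e he
    obtain ⟨h1, h2⟩ := hE e he
    have h21 : e.2 ∉ V₁ := Finset.disjoint_right.mp hdisj h2
    rw [conjPair, conj1, conj1, show wfun V₁ V₂ e.1 = pauliY from if_pos h1,
      show wfun V₁ V₂ e.2 = pauliZ by rw [wfun, if_neg h21, if_pos h2],
      YYY, ZYZ, onQubit_neg, mul_neg]
  have conjZZ : ∀ e ∈ E, W * (onQubit pauliZ e.1 * onQubit pauliZ e.2) * Wᴴ =
      -(onQubit pauliZ e.1 * onQubit pauliZ e.2) := by
    intro e he
    obtain ⟨h1, h2⟩ := hE e he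
    have h21 : e.2 ∉ V₁ := Finset.disjoint_right.mp hdisj h2
    rw [conjPair, conj1, conj1, show wfun V₁ V₂ e.1 = pauliY from if_pos h1,
      show wfun V₁ V₂ e.2 = pauliZ by rw [wfun, if_neg h21, if_pos h2],
      YZY, ZZZ, onQubit_neg, neg_mul]
  -- the main conjugation
  have key : W * H₂ * Wᴴ = -H₂ := by
    have hH : H₂ = (∑ e ∈ E, ((Jy e.1 e.2 : ℂ) • (onQubit pauliY e.1 * onQubit pauliY e.2) +
          (Jz e.1 e.2 : ℂ) • (onQubit pauliZ e.1 * onQubit pauliZ e.2))) +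
        ∑ l ∈ V₁ ∪ V₂, (hc l : ℂ) • onQubit pauliX l := rfl
    rw [hH]
    rw [mul_add, add_mul, Finset.mul_sum, Finset.sum_mul, Finset.mul_sum,
      Finset.sum_mul, neg_add]
    congr 1
    · rw [← Finset.sum_neg_distrib]
      refine Finset.sum_congr rfl fun e he => ?_
      rw [mul_add, add_mul, mul_smul_comm, smul_mul_assoc, mul_smul_comm, smul_mul_assoc,
        conjYY e he, conjZZ e he, smul_neg, smul_neg, neg_add]
    · rw [← Finset.sum_neg_distrib]
      refine Finset.sum_congr rfl fun l hl => ?_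
      rw [mul_smul_comm, smul_mul_assoc, conjX l hl, smul_neg]
  -- spectrum
  have hspec : spectrum ℂ H₂ = spectrum ℂ (-H₂) := by
    let uW : (Matrix (Fin n → Fin 2) (Fin n → Fin 2) ℂ)ˣ := ⟨W, Wᴴ, hWU, hWU'⟩
    have h2 : -H₂ = (uW : Matrix (Fin n → Fin 2) (Fin n → Fin 2) ℂ) * H₂ *
        ((uW⁻¹ : (Matrix (Fin n → Fin 2) (Fin n → Fin 2) ℂ)ˣ) :
          Matrix (Fin n → Fin 2) (Fin n → Fin 2) ℂ) := key.symm
    rw [h2, spectrum.units_conjugate]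
  have hmem : ∀ x : ℝ, (x : ℂ) ∈ spectrum ℂ H₂ → ((-x : ℝ) : ℂ) ∈ spectrum ℂ H₂ := by
    intro x hx
    have : (x : ℂ) ∈ spectrum ℂ (-H₂) := hspec ▸ hx
    rw [← spectrum.neg_eq, Set.mem_neg] at this
    push_cast
    exact this
  refine ⟨⟨hWU, hWU'⟩, key, hspec, ?_⟩
  rintro a ⟨haS, hub⟩
  refine ⟨hmem a haS, fun x hx => ?_⟩
  have := hub (hmem x hx)
  linarith
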